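/- Let U and V be independent nonnegative random variables, C > 0, q > 0, t₀ > 0, and a > 1. If P(U > t) ≥ C t^{-q} for all t > t₀, then P(UV > t) ≥ C E[(V^q / a^q) · 1_{V ≤ a}] · t^{-q} for all t > a·t₀. -/

import Mathlib

open MeasureTheory Real Filter Set ProbabilityTheory

theorem stmt5 {Ω : Type*} [MeasurableSpace Ω] (μ : Measure Ω) [IsProbabilityMeasure μ]
    (U V : Ω → ℝ) (hU : Measurable U) (hV : Measurable V)
    (hU0 : ∀ ω, 0 ≤ U ω) (hV0 : ∀ ω, 0 ≤ V ω)
    (hindep : IndepFun U V μ)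
    (C q t₀ a : ℝ) (hC : 0 < C) (hq : 0 < q) (ht₀ : 0 < t₀) (ha : 1 < a)
    (htail : ∀ t : ℝ, t₀ < t → C * t ^ (-q) ≤ (μ {ω | t < U ω}).toReal) :
    ∀ t : ℝ, a * t₀ < t →
      C * (∫ ω, Set.indicator {ω | V ω ≤ a} (fun ω => V ω ^ q / a ^ q) ω ∂μ) * t ^ (-q)
        ≤ (μ {ω | t < U ω * V ω}).toReal := by
  intro t ht
  have ha0 : (0:ℝ) < a := lt_trans one_pos ha
  have ht0 : (0:ℝ) < t := lt_trans (by positivity) ht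
  set νU := μ.map U with hνU
  set νV := μ.map V with hνV
  have hmap : μ.map (fun ω => (V ω, U ω)) = νV.prod νU :=
    (indepFun_iff_map_prod_eq_prod_map_map hV.aemeasurable hU.aemeasurable).mp hindep.symm
  have hSmeas : MeasurableSet {p : ℝ × ℝ | t < p.2 * p.1} :=
    measurableSet_lt measurable_const (measurable_snd.mul measurable_fst)
  have hkey : μ {ω | t < U ω * V ω} = ∫⁻ v, νU {u | t < u * v} ∂νV := by
    have h1 : μ {ω | t < U ω * V ω} = (νV.prod νU) {p : ℝ × ℝ | t < p.2 * p.1} := by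
      rw [← hmap, Measure.map_apply (hV.prodMk hU) hSmeas]
      rfl
    rw [h1, Measure.prod_apply hSmeas]
    rfl
  have haeV : ∀ᵐ v ∂νV, 0 ≤ v := by
    rw [hνV, ae_map_iff hV.aemeasurable measurableSet_Ici]
    exact Filter.Eventually.of_forall hV0
  set F : ℝ → ℝ := fun v => Set.indicator {v : ℝ | v ≤ a} (fun v => v ^ q / a ^ q) v with hF
  have hFapply : ∀ v : ℝ, F v = if v ≤ a then v ^ q / a ^ q else 0 := by
    intro v
    rw [hF]
    simp only [Set.indicator_apply, Set.mem_setOf_eq]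
  have hFmeas : Measurable F := by
    apply Measurable.indicator
    · exact ((Real.continuous_rpow_const hq.le).measurable).div_const _
    · exact measurableSet_Iic
  have hInd : ∀ ω, Set.indicator {ω | V ω ≤ a} (fun ω => V ω ^ q / a ^ q) ω = F (V ω) := by
    intro ω
    rw [hFapply]
    simp only [Set.indicator_apply, Set.mem_setOf_eq]
  set I : ℝ := ∫ ω, Set.indicator {ω | V ω ≤ a} (fun ω => V ω ^ q / a ^ q) ω ∂μ with hIdef
  have hI : I = ∫ v, F v ∂νV := by
    rw [hIdef, hνV, integral_map hV.aemeasurable hFmeas.aestronglyMeasurable]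
    exact integral_congr_ae (Filter.Eventually.of_forall fun ω => hInd ω)
  have hνVprob : IsProbabilityMeasure νV := Measure.isProbabilityMeasure_map hV.aemeasurable
  have hFbd : ∀ᵐ v ∂νV, ‖F v‖ ≤ 1 := by
    filter_upwards [haeV] with v hv
    rw [hFapply]
    by_cases h : v ≤ a
    · rw [if_pos h, Real.norm_eq_abs, abs_of_nonneg (by positivity),
        div_le_one (by positivity)]
      exact Real.rpow_le_rpow hv h hq.le
    · rw [if_neg h]; simp
  have hFint : Integrable F νV :=
    Integrable.mono' (integrable_const 1) hFmeas.aestronglyMeasurable hFbd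
  have hFnn : 0 ≤ᵐ[νV] F := by
    filter_upwards [haeV] with v hv
    rw [Pi.zero_apply, hFapply]
    by_cases h : v ≤ a
    · rw [if_pos h]; positivity
    · rw [if_neg h]
  have hIeq : ENNReal.ofReal I = ∫⁻ v, ENNReal.ofReal (F v) ∂νV := by
    rw [hI]; exact ofReal_integral_eq_lintegral_ofReal hFint hFnn
  have hpt : ∀ᵐ v ∂νV,
      ENNReal.ofReal (C * t ^ (-q)) * ENNReal.ofReal (F v) ≤ νU {u | t < u * v} := by
    filter_upwards [haeV] with v hv
    rcases eq_or_lt_of_le hv with hv0 | hv0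
    · have hFv : F v = 0 := by
        rw [hFapply, if_pos (show v ≤ a by rw [← hv0]; exact ha0.le)]
        rw [← hv0, Real.zero_rpow hq.ne', zero_div]
      simp [hFv]
    · by_cases h : v ≤ a
      · have hFv : F v = v ^ q / a ^ q := by rw [hFapply, if_pos h]
        have htv : t₀ < t / v := by
          have h1 : t / a ≤ t / v := div_le_div_of_nonneg_left ht0.le hv0 h
          have h2 : t₀ < t / a := (lt_div_iff₀ ha0).mpr (by linarith [ht])
          linarith
        have hset : {ω | t / v < U ω} = {ω | t < U ω * v} := by
          ext ω; simp [Set.mem_setOf_eq, div_lt_iff₀ hv0]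
        have htail' := htail (t / v) htv
        have hνUv : νU {u | t < u * v} = μ {ω | t < U ω * v} := by
          rw [hνU, Measure.map_apply hU
            (show MeasurableSet {u : ℝ | t < u * v} from
              measurableSet_lt measurable_const (measurable_id'.mul_const v))]
          rfl
        have hrw : C * (t / v) ^ (-q) = C * t ^ (-q) * v ^ q := by
          rw [Real.div_rpow ht0.le hv0.le, Real.rpow_neg hv0.le]
          field_simp
        have hle1 : ENNReal.ofReal (C * t ^ (-q)) * ENNReal.ofReal (F v)
            ≤ ENNReal.ofReal (C * (t / v) ^ (-q)) := by
          rw [← ENNReal.ofReal_mul (by positivity), hrw, hFv]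
          apply ENNReal.ofReal_le_ofReal
          have haq : (1:ℝ) ≤ a ^ q := Real.one_le_rpow ha.le hq.le
          have hvq : (0:ℝ) ≤ v ^ q := Real.rpow_nonneg hv0.le q
          have hds : v ^ q / a ^ q ≤ v ^ q := div_le_self hvq haq
          have hct : (0:ℝ) ≤ C * t ^ (-q) := by positivity
          nlinarith
        refine hle1.trans ?_
        rw [hνUv, ← hset]
        exact ENNReal.ofReal_le_of_le_toReal htail'
      · have hFv : F v = 0 := by rw [hFapply, if_neg h]
        simp [hFv]
  have hIpos : 0 ≤ I := by rw [hI]; exact integral_nonneg_of_ae hFnn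
  have hmain : ENNReal.ofReal (C * I * t ^ (-q)) ≤ μ {ω | t < U ω * V ω} := by
    have h1 : ENNReal.ofReal (C * I * t ^ (-q))
        = ENNReal.ofReal (C * t ^ (-q)) * ENNReal.ofReal I := by
      rw [← ENNReal.ofReal_mul (by positivity)]
      ring_nf
    rw [h1, hIeq, ← lintegral_const_mul _ hFmeas.ennreal_ofReal, hkey]
    exact lintegral_mono_ae hpt
  have hfin : μ {ω | t < U ω * V ω} ≠ ⊤ := measure_ne_top μ _
  have h0 : (0:ℝ) ≤ C * I * t ^ (-q) := by positivity
  calc C * I * t ^ (-q) = (ENNReal.ofReal (C * I * t ^ (-q))).toReal :=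
        (ENNReal.toReal_ofReal h0).symm
    _ ≤ (μ {ω | t < U ω * V ω}).toReal := ENNReal.toReal_mono hfin hmain
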